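/- arXiv:2308.15158 — 3 statements merged into one kernel-verified Lean document; each statement's English description precedes it below -/
import Mathlib

section
/- Define L_n for n ≥ 0 by L_0 = L_1 = 1, L_2 = 2, and for n ≥ 3, L_n = Σ_{i=0}^{n} C(n,i) p^i q^{n−i} (L_i + L_{n−i}), where q = 1−p and p ∈ (0,1). Then for all n ≥ 0, L_n = 1 + Σ_{i=2}^{n} C(n,i) · (−1)^i · (i−1 + r·i·(i−1)/2) / (1 − p^i − q^i), where r = 2 − 4pq − 3(p²+q²). -/
noncomputable def ifn (r : ℝ) (k : ℕ) : ℝ := (k:ℝ) - 1 + r*k*((k:ℝ)-1)/2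

noncomputable def cf (p q r : ℝ) (k : ℕ) : ℝ :=
  if k = 0 then 1 else if k = 1 then 0 else ifn r k / (1 - p^k - q^k)

noncomputable def Mf (p q r : ℝ) (n : ℕ) : ℝ :=
  ∑ k ∈ Finset.range (n+1), (n.choose k : ℝ) * (-1)^k * cf p q r k

lemma vswap (f : ℕ → ℝ) (x y : ℝ) (n : ℕ) :
    ∑ i ∈ Finset.range (n+1), (n.choose i : ℝ) * x^i * y^(n-i) *
      (∑ k ∈ Finset.range (i+1), (i.choose k : ℝ) * f k)
    = ∑ k ∈ Finset.range (n+1), (n.choose k : ℝ) * f k * x^k * (x+y)^(n-k) := by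
  have h1 : ∀ i ∈ Finset.range (n+1),
      (n.choose i : ℝ) * x^i * y^(n-i) * (∑ k ∈ Finset.range (i+1), (i.choose k : ℝ) * f k)
      = ∑ k ∈ Finset.range (i+1), (n.choose i : ℝ) * x^i * y^(n-i) * ((i.choose k : ℝ) * f k) := by
    intro i _; rw [Finset.mul_sum]
  rw [Finset.sum_congr rfl h1]
  have h2 : ∀ m, Finset.range m = Finset.Ico 0 m := fun m => (Nat.Ico_zero_eq_range m).symm
  simp only [h2]
  rw [← Finset.sum_Ico_Ico_comm 0 (n+1)
    (fun k i => (n.choose i : ℝ) * x^i * y^(n-i) * ((i.choose k : ℝ) * f k))]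
  refine Finset.sum_congr rfl ?_
  intro k hk
  rw [Finset.mem_Ico] at hk
  have hkn : k ≤ n := by omega
  rw [Finset.sum_Ico_eq_sum_range]
  have h3 : ∀ j ∈ Finset.range (n+1-k),
      (n.choose (k+j) : ℝ) * x^(k+j) * y^(n-(k+j)) * (((k+j).choose k : ℝ) * f k)
      = (n.choose k : ℝ) * f k * x^k * (((n-k).choose j : ℝ) * x^j * y^((n-k)-j)) := by
    intro j hj
    rw [Finset.mem_range] at hj
    have hkj : k + j ≤ n := by omega
    have hcc : (n.choose (k+j)) * ((k+j).choose k) = n.choose k * (n-k).choose j := by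
      have := Nat.choose_mul (n := n) (k := k+j) (s := k) (by omega)
      simpa using this
    have hcc' : ((n.choose (k+j)) : ℝ) * ((k+j).choose k : ℝ)
        = (n.choose k : ℝ) * ((n-k).choose j : ℝ) := by
      exact_mod_cast congrArg (Nat.cast : ℕ → ℝ) hcc
    have hx : x^(k+j) = x^k * x^j := pow_add x k j
    have hsub : n - (k+j) = (n-k) - j := by omega
    rw [hsub, hx]
    linear_combination (x^k * x^j * y^(n-k-j) * f k) * hcc'
  rw [Finset.sum_congr rfl h3, ← Finset.mul_sum]
  have hb : ∑ j ∈ Finset.range (n-k+1), ((n-k).choose j : ℝ) * x^j * y^((n-k)-j)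
      = (x+y)^(n-k) := by
    rw [add_pow]
    refine Finset.sum_congr rfl fun j _ => by ring
  have hrange : n + 1 - k = n - k + 1 := by omega
  rw [hrange, hb]

lemma alt0 (n : ℕ) (hn : 1 ≤ n) :
    ∑ k ∈ Finset.range (n+1), (n.choose k : ℝ) * (-1)^k = 0 := by
  have h := add_pow (-1 : ℝ) 1 n
  simp only [one_pow, mul_one, neg_add_cancel] at h
  rw [zero_pow (by omega : n ≠ 0)] at h
  calc ∑ k ∈ Finset.range (n+1), (n.choose k : ℝ) * (-1)^k
      = ∑ k ∈ Finset.range (n+1), (-1:ℝ)^k * (n.choose k : ℝ) :=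
        Finset.sum_congr rfl fun k _ => mul_comm _ _
    _ = 0 := h.symm

lemma alt1 (n : ℕ) (hn : 2 ≤ n) :
    ∑ k ∈ Finset.range (n+1), (n.choose k : ℝ) * (-1)^k * k = 0 := by
  obtain ⟨m, rfl⟩ : ∃ m, n = m + 1 := ⟨n-1, by omega⟩
  rw [Finset.sum_range_succ']
  simp only [Nat.cast_zero, mul_zero, add_zero]
  have h : ∀ j ∈ Finset.range (m+1),
      ((m+1).choose (j+1) : ℝ) * (-1)^(j+1) * ((j+1 : ℕ) : ℝ)
      = -((m+1) * ((m.choose j : ℝ) * (-1)^j)) := by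
    intro j _
    have hc : ((m+1 : ℕ) : ℝ) * (m.choose j : ℝ)
        = ((m+1).choose (j+1) : ℝ) * ((j+1 : ℕ) : ℝ) := by
      exact_mod_cast congrArg (Nat.cast : ℕ → ℝ) (Nat.add_one_mul_choose_eq m j)
    push_cast at hc ⊢
    rw [pow_succ]
    linear_combination ((-1:ℝ)^j) * hc
  rw [Finset.sum_congr rfl h, Finset.sum_neg_distrib, ← Finset.mul_sum]
  rw [alt0 m (by omega)]
  ring

lemma alt2 (n : ℕ) (hn : 3 ≤ n) :
    ∑ k ∈ Finset.range (n+1), (n.choose k : ℝ) * (-1)^k * (k * ((k:ℝ)-1)) = 0 := by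
  obtain ⟨m, rfl⟩ : ∃ m, n = m + 2 := ⟨n-2, by omega⟩
  rw [Finset.sum_range_succ', Finset.sum_range_succ']
  simp only [Nat.cast_zero, Nat.cast_one, mul_zero, add_zero, zero_mul, sub_self, zero_sub]
  have h : ∀ j ∈ Finset.range (m+1),
      ((m+2).choose (j+1+1) : ℝ) * (-1)^(j+1+1) * (((j+1+1 : ℕ) : ℝ) * (((j+1+1 : ℕ) : ℝ) - 1))
      = ((m:ℝ)+2) * ((m:ℝ)+1) * ((m.choose j : ℝ) * (-1)^j) := by
    intro j _
    have hc1 : ((m+2 : ℕ) : ℝ) * ((m+1).choose (j+1) : ℝ)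
        = ((m+2).choose (j+2) : ℝ) * ((j+2 : ℕ) : ℝ) := by
      exact_mod_cast congrArg (Nat.cast : ℕ → ℝ) (Nat.add_one_mul_choose_eq (m+1) (j+1))
    have hc2 : ((m+1 : ℕ) : ℝ) * (m.choose j : ℝ)
        = ((m+1).choose (j+1) : ℝ) * ((j+1 : ℕ) : ℝ) := by
      exact_mod_cast congrArg (Nat.cast : ℕ → ℝ) (Nat.add_one_mul_choose_eq m j)
    push_cast at hc1 hc2 ⊢
    rw [pow_succ, pow_succ]
    linear_combination (-(-1:ℝ)^j*((j:ℝ)+1)) * hc1 + (-(-1:ℝ)^j*((m:ℝ)+2)) * hc2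
  rw [Finset.sum_congr rfl h, ← Finset.mul_sum, alt0 m (by omega)]
  ring

lemma altfull (r : ℝ) (n : ℕ) (hn : 3 ≤ n) :
    ∑ k ∈ Finset.range (n+1), (n.choose k : ℝ) * (-1)^k * ifn r k = 0 := by
  have h : ∀ k ∈ Finset.range (n+1),
      (n.choose k : ℝ) * (-1)^k * ifn r k
      = ((n.choose k : ℝ) * (-1)^k * k - (n.choose k : ℝ) * (-1)^k)
        + (r/2) * ((n.choose k : ℝ) * (-1)^k * (k * ((k:ℝ)-1))) := by
    intro k _; simp only [ifn]; ring
  rw [Finset.sum_congr rfl h, Finset.sum_add_distrib, Finset.sum_sub_distrib,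
    ← Finset.mul_sum, alt0 n (by omega), alt1 n (by omega), alt2 n hn]
  ring

lemma denom_pos (p q : ℝ) (hp0 : 0 < p) (hp1 : p < 1) (hq : q = 1 - p)
    {k : ℕ} (hk : 2 ≤ k) : 0 < 1 - p^k - q^k := by
  have hq0 : 0 < q := by rw [hq]; linarith
  have h1 : p^k ≤ p^2 := pow_le_pow_of_le_one hp0.le hp1.le hk
  have h2 : q^k ≤ q^2 := pow_le_pow_of_le_one hq0.le (by rw [hq]; linarith) hk
  have : p^2 + q^2 < 1 := by rw [hq]; nlinarith
  linarith

lemma cfmul (p q r : ℝ) (hp0 : 0 < p) (hp1 : p < 1) (hq : q = 1 - p) (k : ℕ) :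
    cf p q r k * (1 - p^k - q^k) = ifn r k := by
  match k with
  | 0 => simp [cf, ifn]
  | 1 => simp [cf, ifn]
  | (m+2) =>
    have hd := denom_pos p q hp0 hp1 hq (k := m+2) (by omega)
    simp only [cf, ifn]
    rw [if_neg (by omega), if_neg (by omega)]
    field_simp

lemma sumM (p q r x y : ℝ) (hxy : x + y = 1) (n : ℕ) :
    ∑ i ∈ Finset.range (n+1), (n.choose i : ℝ) * x^i * y^(n-i) * Mf p q r i
    = ∑ k ∈ Finset.range (n+1), (n.choose k : ℝ) * (-1)^k * cf p q r k * x^k := by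
  have h := vswap (fun k => (-1:ℝ)^k * cf p q r k) x y n
  rw [hxy] at h
  simp only [one_pow, mul_one] at h
  calc ∑ i ∈ Finset.range (n+1), (n.choose i : ℝ) * x^i * y^(n-i) * Mf p q r i
      = ∑ i ∈ Finset.range (n+1), (n.choose i : ℝ) * x^i * y^(n-i) *
          (∑ k ∈ Finset.range (i+1), (i.choose k : ℝ) * ((-1:ℝ)^k * cf p q r k)) := by
        refine Finset.sum_congr rfl fun i _ => ?_
        simp only [Mf, mul_assoc]
    _ = ∑ k ∈ Finset.range (n+1), (n.choose k : ℝ) * ((-1:ℝ)^k * cf p q r k) * x^k := h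
    _ = _ := Finset.sum_congr rfl fun k _ => by ring

lemma Mrec (p q r : ℝ) (hp0 : 0 < p) (hp1 : p < 1) (hq : q = 1 - p)
    (n : ℕ) (hn : 3 ≤ n) :
    Mf p q r n = ∑ i ∈ Finset.range (n+1),
      (n.choose i : ℝ) * p^i * q^(n-i) * (Mf p q r i + Mf p q r (n-i)) := by
  have hpq : p + q = 1 := by rw [hq]; ring
  have hsplit : ∑ i ∈ Finset.range (n+1),
      (n.choose i : ℝ) * p^i * q^(n-i) * (Mf p q r i + Mf p q r (n-i))
      = (∑ i ∈ Finset.range (n+1), (n.choose i : ℝ) * p^i * q^(n-i) * Mf p q r i)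
      + (∑ i ∈ Finset.range (n+1), (n.choose i : ℝ) * p^i * q^(n-i) * Mf p q r (n-i)) := by
    rw [← Finset.sum_add_distrib]
    exact Finset.sum_congr rfl fun i _ => by ring
  have hrefl : ∑ i ∈ Finset.range (n+1), (n.choose i : ℝ) * p^i * q^(n-i) * Mf p q r (n-i)
      = ∑ i ∈ Finset.range (n+1), (n.choose i : ℝ) * q^i * p^(n-i) * Mf p q r i := by
    rw [← Finset.sum_range_reflect]
    refine Finset.sum_congr rfl fun i hi => ?_
    rw [Finset.mem_range] at hi
    have h1 : n + 1 - 1 - i = n - i := by omega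
    have h2 : n - (n - i) = i := by omega
    rw [h1, h2, Nat.choose_symm (by omega)]
    ring
  rw [hsplit, hrefl, sumM p q r p q hpq n, sumM p q r q p (by linarith) n]
  have key : ∑ k ∈ Finset.range (n+1),
      ((n.choose k : ℝ) * (-1)^k * cf p q r k
        - ((n.choose k : ℝ) * (-1)^k * cf p q r k * p^k
          + (n.choose k : ℝ) * (-1)^k * cf p q r k * q^k)) = 0 := by
    have h : ∀ k ∈ Finset.range (n+1),
        (n.choose k : ℝ) * (-1)^k * cf p q r k
          - ((n.choose k : ℝ) * (-1)^k * cf p q r k * p^k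
            + (n.choose k : ℝ) * (-1)^k * cf p q r k * q^k)
        = (n.choose k : ℝ) * (-1)^k * (cf p q r k * (1 - p^k - q^k)) := by
      intro k _; ring
    rw [Finset.sum_congr rfl h]
    have h2 : ∀ k ∈ Finset.range (n+1),
        (n.choose k : ℝ) * (-1)^k * (cf p q r k * (1 - p^k - q^k))
        = (n.choose k : ℝ) * (-1)^k * ifn r k := by
      intro k _; rw [cfmul p q r hp0 hp1 hq]
    rw [Finset.sum_congr rfl h2, altfull r n hn]
  rw [Finset.sum_sub_distrib, Finset.sum_add_distrib] at key
  show Mf p q r n = _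
  simp only [Mf]
  linarith

lemma Mstmt (p q r : ℝ) (n : ℕ) :
    Mf p q r n = 1 + ∑ i ∈ Finset.Icc 2 n,
      (n.choose i : ℝ) * (-1) ^ i * (((i:ℝ) - 1) + r * i * ((i:ℝ) - 1) / 2)
        / (1 - p ^ i - q ^ i) := by
  rcases Nat.eq_zero_or_pos n with h0 | h0
  · subst h0
    simp [Mf, cf]
  · have hset : Finset.range (n+1) = insert 0 (insert 1 (Finset.Icc 2 n)) := by
      ext k
      simp only [Finset.mem_range, Finset.mem_insert, Finset.mem_Icc]
      omega
    rw [Mf, hset, Finset.sum_insert (by simp), Finset.sum_insert (by simp)]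
    have ht0 : (n.choose 0 : ℝ) * (-1)^0 * cf p q r 0 = 1 := by simp [cf]
    have ht1 : (n.choose 1 : ℝ) * (-1)^1 * cf p q r 1 = 0 := by simp [cf]
    rw [ht0, ht1]
    have hcong : ∀ i ∈ Finset.Icc 2 n,
        (n.choose i : ℝ) * (-1)^i * cf p q r i
        = (n.choose i : ℝ) * (-1) ^ i * (((i:ℝ) - 1) + r * i * ((i:ℝ) - 1) / 2)
          / (1 - p ^ i - q ^ i) := by
      intro i hi
      rw [Finset.mem_Icc] at hi
      rw [cf, if_neg (by omega), if_neg (by omega), ifn]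
      ring
    rw [Finset.sum_congr rfl hcong]
    ring

lemma M0 (p q r : ℝ) : Mf p q r 0 = 1 := by simp [Mf, cf]

lemma M1 (p q r : ℝ) : Mf p q r 1 = 1 := by
  rw [Mf]
  rw [Finset.sum_range_succ, Finset.sum_range_succ, Finset.sum_range_zero]
  simp [cf]

lemma M2 (p q r : ℝ) (hp0 : 0 < p) (hp1 : p < 1) (hq : q = 1 - p)
    (hr : r = 2 - 4*p*q - 3*(p^2 + q^2)) : Mf p q r 2 = 2 := by
  have hd : 1 - p^2 - q^2 = 2*p*q := by rw [hq]; ring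
  have hd0 : (2:ℝ)*p*q ≠ 0 := by
    have : 0 < q := by rw [hq]; linarith
    positivity
  have hc2 : cf p q r 2 = 1 := by
    rw [cf, if_neg (by omega), if_neg (by omega), ifn]
    rw [hd]
    have hnum : ((2:ℕ):ℝ) - 1 + r*((2:ℕ):ℝ)*(((2:ℕ):ℝ)-1)/2 = 2*p*q := by
      push_cast
      rw [hr, hq]; ring
    rw [hnum, div_self hd0]
  rw [Mf]
  rw [Finset.sum_range_succ, Finset.sum_range_succ, Finset.sum_range_succ, Finset.sum_range_zero]
  rw [hc2]
  simp [cf]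
  norm_num

theorem stmt_4 (p q r : ℝ) (hp0 : 0 < p) (hp1 : p < 1) (hq : q = 1 - p)
    (hr : r = 2 - 4*p*q - 3*(p^2 + q^2))
    (L : ℕ → ℝ) (hL0 : L 0 = 1) (hL1 : L 1 = 1) (hL2 : L 2 = 2)
    (hLrec : ∀ n, 3 ≤ n →
      L n = ∑ i ∈ Finset.range (n + 1),
        (n.choose i : ℝ) * p ^ i * q ^ (n - i) * (L i + L (n - i))) :
    ∀ n, L n = 1 + ∑ i ∈ Finset.Icc 2 n,
      (n.choose i : ℝ) * (-1) ^ i * ((i - 1) + r * i * (i - 1) / 2)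
        / (1 - p ^ i - q ^ i) := by
  have key : ∀ n, L n = Mf p q r n := by
    intro n
    induction n using Nat.strong_induction_on with
    | _ n ih =>
      match n, ih with
      | 0, _ => rw [hL0, M0]
      | 1, _ => rw [hL1, M1]
      | 2, _ => rw [hL2, M2 p q r hp0 hp1 hq hr]
      | (m+3), ih =>
        have hn : 3 ≤ m + 3 := by omega
        have hrec := hLrec (m+3) hn
        have hMr := Mrec p q r hp0 hp1 hq (m+3) hn
        set D : ℕ → ℝ := fun i => L i - Mf p q r i with hD
        have hDsmall : ∀ i, i < m + 3 → D i = 0 := by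
          intro i hi
          simp only [hD]
          rw [ih i hi]
          ring
        have hdiff : D (m+3) = (p^(m+3) + q^(m+3)) * D (m+3) := by
          have hsum : D (m+3) = ∑ i ∈ Finset.range (m+3+1),
              (((m+3).choose i : ℝ) * p ^ i * q ^ (m+3 - i)) * (D i + D (m+3-i)) := by
            simp only [hD]
            rw [hrec, hMr, ← Finset.sum_sub_distrib]
            exact Finset.sum_congr rfl fun i _ => by ring
          refine hsum.trans ?_
          rw [Finset.sum_range_succ, Finset.sum_range_succ']
          have hmid : ∀ j ∈ Finset.range (m+2),
              (((m+3).choose (j+1) : ℝ) * p ^ (j+1) * q ^ (m+3-(j+1))) * (D (j+1) + D (m+3-(j+1)))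
              = 0 := by
            intro j hj
            rw [Finset.mem_range] at hj
            rw [hDsmall (j+1) (by omega), hDsmall (m+3-(j+1)) (by omega)]
            ring
          rw [Finset.sum_eq_zero hmid]
          simp only [Nat.sub_self, Nat.sub_zero, Nat.choose_self, Nat.choose_zero_right,
            pow_zero, Nat.cast_one, one_mul, mul_one]
          rw [hDsmall 0 (by omega)]
          ring
        have hlt : p^(m+3) + q^(m+3) < 1 := by
          have := denom_pos p q hp0 hp1 hq (k := m+3) (by omega)
          linarith
        have hz : (1 - (p^(m+3) + q^(m+3))) * D (m+3) = 0 := by linear_combination hdiff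
        have hD0 : D (m+3) = 0 := by
          rcases mul_eq_zero.mp hz with h | h
          · exfalso; linarith
          · exact h
        have : L (m+3) - Mf p q r (m+3) = 0 := hD0
        linarith
  intro n
  rw [key n, Mstmt]
end

section
/- The function f(p) = (p² − p − 1/2)/((1−p)·log(1−p) + p·log p) on (0,1) attains its minimum (in absolute value of the throughput expression, equivalently the expression n/L_n leading term 1/f is maximized) at p = 1/2, where f(1/2) = (−3/4)/(−log 2) = 3/(4 log 2), so the leading throughput term is 4 log 2 / 3. -/
open Real Set

lemma lemA (y : ℝ) (hy0 : 0 < y) (hy1 : y ≤ 1) : y^2 - 1 ≤ 2*(y*Real.log y) := by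
  have hanti : AntitoneOn (fun x => 2*(x*Real.log x) - x^2 + 1) (Set.Ioi (0:ℝ)) := by
    have hint : interior (Set.Ioi (0:ℝ)) = Set.Ioi 0 := interior_Ioi
    apply antitoneOn_of_deriv_nonpos (convex_Ioi 0)
    · exact (((continuous_const.mul Real.continuous_mul_log).sub
        (continuous_pow 2)).add continuous_const).continuousOn
    · rw [hint]
      intro x hx
      exact ((((Real.hasDerivAt_mul_log (ne_of_gt hx)).const_mul 2).sub
        (hasDerivAt_pow 2 x)).add_const 1).differentiableAt.differentiableWithinAt
    · rw [hint]
      intro x hx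
      have hx : (0:ℝ) < x := hx
      have hder : HasDerivAt (fun x => 2*(x*Real.log x) - x^2 + 1)
          (2*(Real.log x + 1) - (2:ℕ)*x^(2-1)) x :=
        (((Real.hasDerivAt_mul_log (ne_of_gt hx)).const_mul 2).sub
          (hasDerivAt_pow 2 x)).add_const 1
      rw [hder.deriv]
      have := Real.log_le_sub_one_of_pos hx
      push_cast
      nlinarith
  have h01 : (1:ℝ) ∈ Set.Ioi (0:ℝ) := by norm_num
  have hy : y ∈ Set.Ioi (0:ℝ) := hy0
  have := hanti hy h01 hy1
  simp only [Real.log_one] at this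
  nlinarith [this]

lemma lemB (y : ℝ) (hy : 1 ≤ y) : 2*(y-1) ≤ (y+1)*Real.log y := by
  set g : ℝ → ℝ := fun x => (x+1)*Real.log x - 2*(x-1) with hg
  have hmono : MonotoneOn g (Set.Ici (1:ℝ)) := by
    have hint : interior (Set.Ici (1:ℝ)) = Set.Ioi 1 := interior_Ici
    apply monotoneOn_of_deriv_nonneg (convex_Ici 1)
    · apply ContinuousOn.sub
      · exact ContinuousOn.mul (by fun_prop) (Real.continuousOn_log.mono (by
          intro x hx; simp at hx ⊢; linarith))
      · fun_prop
    · rw [hint]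
      intro x hx
      have hx1 : (1:ℝ) < x := hx
      have hx0 : (0:ℝ) < x := by linarith
      exact ((((hasDerivAt_id x).add_const 1).mul (Real.hasDerivAt_log (ne_of_gt hx0))).sub
        (((hasDerivAt_id x).sub_const 1).const_mul 2)).differentiableAt.differentiableWithinAt
    · rw [hint]
      intro x hx
      have hx1 : (1:ℝ) < x := hx
      have hx0 : (0:ℝ) < x := by linarith
      have hd : deriv g x = (1*Real.log x + (x+1)*x⁻¹) - 2*1 := by
        have := ((((hasDerivAt_id x).add_const 1).mul (Real.hasDerivAt_log (ne_of_gt hx0))).sub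
          (((hasDerivAt_id x).sub_const 1).const_mul 2))
        have := this.deriv
        exact this
      rw [hd]
      have h1 : 1 - x⁻¹ ≤ Real.log x := Real.one_sub_inv_le_log_of_pos hx0
      have h2 : (x+1)*x⁻¹ = 1 + x⁻¹ := by field_simp
      rw [h2]; linarith
  have h1 : (1:ℝ) ∈ Set.Ici (1:ℝ) := by norm_num
  have hyi : y ∈ Set.Ici (1:ℝ) := hy
  have := hmono h1 hyi hy
  simp only [hg, Real.log_one] at this
  linarith

-- key inequality for p in [1/2, 1)
lemma key (p : ℝ) (hp1 : p < 1) (hp : 1/2 ≤ p) :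
    (2*p-1)^2 * (3*(2*p+3) - 4*Real.log 2*(2*p+1)) ≤
      4*(2*p+1) * (3 * ((1-p)*Real.log (1-p) + p*Real.log p)
        - 4*Real.log 2*(p^2-p-1/2)) := by
  have hp0 : 0 < p := by linarith
  have hA := lemA (2*(1-p)) (by linarith) (by linarith)
  have hB := lemB (2*p) (by linarith)
  have e1 : Real.log (2*(1-p)) = Real.log 2 + Real.log (1-p) :=
    Real.log_mul (by norm_num) (by intro h; nlinarith)
  have e2 : Real.log (2*p) = Real.log 2 + Real.log p :=
    Real.log_mul (by norm_num) (ne_of_gt hp0)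
  rw [e1] at hA
  rw [e2] at hB
  nlinarith [mul_le_mul_of_nonneg_left hB hp0.le,
    mul_le_mul_of_nonneg_left hA (by linarith : (0:ℝ) ≤ 3*(2*p+1))]

lemma factor_pos (p : ℝ) (hp0 : 0 < p) (hp1 : p < 1) :
    0 < 3*(2*p+3) - 4*Real.log 2*(2*p+1) := by
  have := Real.log_two_lt_d9
  nlinarith

-- strict key for p ≠ 1/2
lemma key2 (p : ℝ) (hp0 : 0 < p) (hp1 : p < 1) (hne : p ≠ 1/2) :
    4 * Real.log 2 * (p^2 - p - 1/2) < 3 * ((1-p)*Real.log (1-p) + p*Real.log p) := by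
  rcases le_or_gt (1/2) p with h | h
  · have hk := key p hp1 h
    have hfac := factor_pos p hp0 hp1
    have hu : (0:ℝ) < (2*p-1)^2 := by
      have : 2*p - 1 ≠ 0 := by intro hh; apply hne; linarith
      positivity
    nlinarith
  · have hk := key (1-p) (by linarith) (by linarith)
    have hfac := factor_pos (1-p) (by linarith) (by linarith)
    have h1 : (1:ℝ) - (1-p) = p := by ring
    rw [h1] at hk
    have hu : (0:ℝ) < (2*(1-p)-1)^2 := by
      have : 2*(1-p) - 1 ≠ 0 := by intro hh; apply hne; linarith
      positivity
    nlinarith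

theorem stmt_8 (p : ℝ) (hp0 : 0 < p) (hp1 : p < 1) :
    3 / (4 * Real.log 2) ≤
      (p^2 - p - 1/2) / ((1 - p) * Real.log (1 - p) + p * Real.log p) ∧
    ((p^2 - p - 1/2) / ((1 - p) * Real.log (1 - p) + p * Real.log p)
        = 3 / (4 * Real.log 2) ↔ p = 1/2) := by
  have hl2 : 0 < Real.log 2 := Real.log_pos one_lt_two
  have hDneg : (1 - p) * Real.log (1 - p) + p * Real.log p < 0 := by
    have h1 : Real.log p < 0 := Real.log_neg hp0 hp1
    have h2 : Real.log (1-p) < 0 := Real.log_neg (by linarith) (by linarith)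
    have h3 : p * Real.log p < 0 := mul_neg_of_pos_of_neg hp0 h1
    have h4 : (1-p) * Real.log (1-p) < 0 := mul_neg_of_pos_of_neg (by linarith) h2
    nlinarith
  have hhalf : Real.log ((1:ℝ)/2) = -Real.log 2 := by rw [one_div, Real.log_inv]
  have hKey : 4 * Real.log 2 * (p^2 - p - 1/2)
      ≤ 3 * ((1 - p) * Real.log (1 - p) + p * Real.log p) := by
    rcases eq_or_ne p (1/2) with hp | hne
    · rw [hp]
      have h12 : (1:ℝ) - 1/2 = 1/2 := by norm_num
      rw [h12, hhalf]
      nlinarith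
    · exact (key2 p hp0 hp1 hne).le
  refine ⟨?_, ?_, ?_⟩
  · have h1 : (p^2 - p - 1/2) / ((1 - p) * Real.log (1 - p) + p * Real.log p)
        = (-(p^2 - p - 1/2)) / (-((1 - p) * Real.log (1 - p) + p * Real.log p)) := by
      rw [neg_div_neg_eq]
    rw [h1, le_div_iff₀ (by linarith : 0 < -((1 - p) * Real.log (1 - p) + p * Real.log p)),
      div_mul_eq_mul_div, div_le_iff₀ (by positivity : 0 < 4*Real.log 2)]
    nlinarith
  · intro h
    by_contra hne
    have hstrict := key2 p hp0 hp1 hne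
    rw [div_eq_div_iff (ne_of_lt hDneg) (by positivity : (4*Real.log 2) ≠ 0)] at h
    nlinarith
  · intro hp
    rw [hp]
    have h12 : (1:ℝ) - 1/2 = 1/2 := by norm_num
    rw [h12, hhalf]
    rw [div_eq_div_iff (by nlinarith : (1/2*-Real.log 2 + 1/2*-Real.log 2) ≠ 0)
      (by positivity : (4*Real.log 2) ≠ 0)]
    ring
end

section
/- For p ∈ (0,1), q = 1−p, the alternating binomial sum identity Σ_{i=2}^{n} C(n,i)(−1)^i i(i−1) x^i evaluated at x-values p(μ): Σ_{m≥0} Σ_{μ1+μ2=m} C(m,μ1) (p^{μ1} q^{μ2})² n(n−1) (1 − p^{μ1}q^{μ2})^{n−2} = Σ_{i=2}^n C(n,i) (−1)^i i(i−1)/(1 − p^i − q^i), for every n ≥ 2 for which the left-hand series converges (it converges absolutely). -/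
open Finset

lemma nat_choose_mul_aux (k j : ℕ) :
    (k + 2).choose (j + 2) * (j + 2) * (j + 1) = (k + 2) * (k + 1) * k.choose j := by
  have h1 := Nat.add_one_mul_choose_eq (k + 1) (j + 1)
  have h2 := Nat.add_one_mul_choose_eq k j
  calc (k + 2).choose (j + 2) * (j + 2) * (j + 1)
      = (k + 1 + 1) * (k + 1).choose (j + 1) * (j + 1) := by rw [h1]
    _ = (k + 1 + 1) * ((k + 1).choose (j + 1) * (j + 1)) := by ring
    _ = (k + 1 + 1) * ((k + 1) * k.choose j) := by rw [← h2]
    _ = (k + 2) * (k + 1) * k.choose j := by ring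

lemma poly_id (x : ℝ) (n : ℕ) (hn : 2 ≤ n) :
    x ^ 2 * n * ((n : ℝ) - 1) * (1 - x) ^ (n - 2)
      = ∑ i ∈ Icc 2 n, (n.choose i : ℝ) * (-1) ^ i * i * ((i : ℝ) - 1) * x ^ i := by
  obtain ⟨k, rfl⟩ : ∃ k, n = k + 2 := ⟨n - 2, by omega⟩
  have hIcc : Icc 2 (k + 2) = Ico 2 (k + 3) := by exact (Finset.Ico_add_one_right_eq_Icc 2 (k + 2)).symm
  rw [hIcc, Finset.sum_Ico_eq_sum_range]
  have hpow : (1 - x) ^ k = ∑ j ∈ range (k + 1), (-x) ^ j * 1 ^ (k - j) * (k.choose j : ℝ) := by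
    rw [← add_pow]; ring_nf
  have hk3 : k + 3 - 2 = k + 1 := by omega
  rw [hk3]
  simp only [Nat.add_sub_cancel]
  rw [hpow, Finset.mul_sum]
  apply Finset.sum_congr rfl
  intro j _
  have h : ((k + 2).choose (j + 2) : ℝ) * (j + 2) * (j + 1) = (k + 2) * (k + 1) * k.choose j := by
    exact_mod_cast nat_choose_mul_aux k j
  have h2j : 2 + j = j + 2 := by omega
  rw [h2j]
  push_cast
  linear_combination (-((-1 : ℝ) ^ j * x ^ j * x ^ 2)) * h

theorem stmt_18 (p q : ℝ) (hp0 : 0 < p) (hp1 : p < 1) (hq : q = 1 - p)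
    (n : ℕ) (hn : 2 ≤ n)
    (hsum : Summable fun m : ℕ =>
      ∑ μ ∈ Finset.range (m + 1),
        (m.choose μ : ℝ) * (p ^ μ * q ^ (m - μ))^2 * n * (n - 1)
          * (1 - p ^ μ * q ^ (m - μ)) ^ (n - 2)) :
    ∑' m : ℕ, ∑ μ ∈ Finset.range (m + 1),
        (m.choose μ : ℝ) * (p ^ μ * q ^ (m - μ))^2 * n * (n - 1)
          * (1 - p ^ μ * q ^ (m - μ)) ^ (n - 2)
      = ∑ i ∈ Finset.Icc 2 n,
          (n.choose i : ℝ) * (-1) ^ i * i * (i - 1) / (1 - p ^ i - q ^ i) := by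
  have hq0 : 0 < q := by rw [hq]; linarith
  have hq1 : q < 1 := by rw [hq]; linarith
  -- for i ∈ Icc 2 n, the ratio r i = p^i + q^i satisfies 0 ≤ r i < 1
  have hr0 : ∀ i, 0 ≤ p ^ i + q ^ i := fun i => by positivity
  have hr1 : ∀ i ∈ Icc 2 n, p ^ i + q ^ i < 1 := by
    intro i hi
    rw [Finset.mem_Icc] at hi
    have h1 : p ^ i ≤ p ^ 2 := pow_le_pow_of_le_one hp0.le hp1.le hi.1
    have h2 : q ^ i ≤ q ^ 2 := pow_le_pow_of_le_one hq0.le hq1.le hi.1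
    nlinarith [mul_pos hp0 hq0]
  -- rewrite each inner sum
  have key : ∀ m : ℕ,
      (∑ μ ∈ Finset.range (m + 1),
        (m.choose μ : ℝ) * (p ^ μ * q ^ (m - μ))^2 * n * (n - 1)
          * (1 - p ^ μ * q ^ (m - μ)) ^ (n - 2))
      = ∑ i ∈ Icc 2 n,
          (n.choose i : ℝ) * (-1) ^ i * i * ((i : ℝ) - 1) * (p ^ i + q ^ i) ^ m := by
    intro m
    have step1 : ∀ μ ∈ Finset.range (m + 1),
        (m.choose μ : ℝ) * (p ^ μ * q ^ (m - μ))^2 * n * (n - 1)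
          * (1 - p ^ μ * q ^ (m - μ)) ^ (n - 2)
        = ∑ i ∈ Icc 2 n,
            (n.choose i : ℝ) * (-1) ^ i * i * ((i : ℝ) - 1)
              * ((p ^ i) ^ μ * (q ^ i) ^ (m - μ) * (m.choose μ : ℝ)) := by
      intro μ _
      have := poly_id (p ^ μ * q ^ (m - μ)) n hn
      calc (m.choose μ : ℝ) * (p ^ μ * q ^ (m - μ))^2 * n * (n - 1)
              * (1 - p ^ μ * q ^ (m - μ)) ^ (n - 2)
          = (m.choose μ : ℝ) * ((p ^ μ * q ^ (m - μ))^2 * n * ((n : ℝ) - 1)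
              * (1 - p ^ μ * q ^ (m - μ)) ^ (n - 2)) := by ring
        _ = (m.choose μ : ℝ) * ∑ i ∈ Icc 2 n,
              (n.choose i : ℝ) * (-1) ^ i * i * ((i : ℝ) - 1) * (p ^ μ * q ^ (m - μ)) ^ i := by
              rw [this]
        _ = ∑ i ∈ Icc 2 n, (n.choose i : ℝ) * (-1) ^ i * i * ((i : ℝ) - 1)
              * ((p ^ i) ^ μ * (q ^ i) ^ (m - μ) * (m.choose μ : ℝ)) := by
              rw [Finset.mul_sum]
              apply Finset.sum_congr rfl
              intro i _
              rw [mul_pow, ← pow_mul, ← pow_mul, mul_comm μ i, mul_comm (m - μ) i,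
                pow_mul, pow_mul]
              ring
    rw [Finset.sum_congr rfl step1, Finset.sum_comm]
    apply Finset.sum_congr rfl
    intro i _
    rw [← Finset.mul_sum, ← add_pow]
  rw [tsum_congr key]
  rw [Summable.tsum_finsetSum (fun i hi => ((summable_geometric_of_lt_one (hr0 i) (hr1 i hi)).mul_left _))]
  apply Finset.sum_congr rfl
  intro i hi
  rw [tsum_mul_left, tsum_geometric_of_lt_one (hr0 i) (hr1 i hi)]
  have h1 : (1 : ℝ) - (p ^ i + q ^ i) = 1 - p ^ i - q ^ i := by ring
  rw [h1, div_eq_mul_inv]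
end
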